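/- Assume the edge coefficients are symmetric (β_{st} = β_{ts} for all s, t) and F_s(0_s) = 0 for every s ∈ V. Let h : Π_s X_s → (0, ∞) satisfy, for every s ∈ V and every x ∈ Π_s X_s, the one-coordinate ratio identity h(x) = h(x^{s←0_s}) · exp( f_s(x_s) − f_s(0_s) + Σ_{t≠s} β_{ts} F_t(x_t) F_s(x_s) ). Then for all x ∈ Π_s X_s, h(x) = h(𝟘) · exp( Σ_{s∈V} (f_s(x_s) − f_s(0_s)) + (1/2) Σ_{s∈V} Σ_{t≠s} β_{ts} F_t(x_t) F_s(x_s) ). -/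

import Mathlib

open Finset

/-- Brook-type iteration: if a positive function `h` satisfies the one-coordinate ratio
identity at every node, with symmetric edge coefficients and `F s (0_s) = 0`, then `h`
has the pairwise joint form up to the constant `h 𝟘`. -/
theorem stmt_3 {p : ℕ} {X : Fin p → Type*}
    (z : ∀ s, X s)
    (f F : ∀ s, X s → ℝ)
    (β : Fin p → Fin p → ℝ)
    (hsym : ∀ s t, β s t = β t s)
    (hF0 : ∀ s, F s (z s) = 0)
    (h : ((t : Fin p) → X t) → ℝ)
    (hpos : ∀ x, 0 < h x)
    (hratio : ∀ (s : Fin p) (x : (t : Fin p) → X t),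
      h x = h (Function.update x s (z s)) *
        Real.exp (f s (x s) - f s (z s)
          + ∑ t ∈ univ \ {s}, β t s * F t (x t) * F s (x s))) :
    ∀ x : (t : Fin p) → X t,
      h x = h z * Real.exp (∑ u, (f u (x u) - f u (z u))
        + (1 / 2) * ∑ u, ∑ t ∈ univ \ {u}, β t u * F t (x t) * F u (x u)) := by
  intro x
  set y : ℕ → ∀ t, X t := fun k t => if t.val < k then x t else z t with hy
  have hy0 : y 0 = z := by funext t; simp [hy]
  have hyp : y p = x := by funext t; simp [hy, t.isLt]
  have key : ∀ k, k ≤ p → h (y k) = h z *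
      Real.exp ((∑ u ∈ univ.filter (fun u : Fin p => u.val < k), (f u (x u) - f u (z u)))
        + ∑ u ∈ univ.filter (fun u : Fin p => u.val < k),
            ∑ t ∈ univ.filter (fun t : Fin p => t.val < u.val),
              β t u * F t (x t) * F u (x u)) := by
    intro k hk
    induction k with
    | zero => simp [hy0]
    | succ k ih =>
      have hk' : k < p := hk
      have ihk := ih (le_of_lt hk')
      set s : Fin p := ⟨k, hk'⟩ with hs
      have hupd2 : Function.update (y (k+1)) s (z s) = y k := by
        funext t
        rcases eq_or_ne t s with rfl | hts
        · simp [hy, hs]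
        · have hne : t.val ≠ k := fun hh => hts (Fin.ext hh)
          rw [Function.update_of_ne hts]
          simp only [hy]
          by_cases h1 : t.val < k
          · rw [if_pos (by omega), if_pos h1]
          · rw [if_neg (by omega), if_neg h1]
      have hys : y (k+1) s = x s := by simp [hy, hs]
      have hsum : ∑ t ∈ univ \ {s}, β t s * F t (y (k+1) t) * F s (y (k+1) s)
          = ∑ t ∈ univ.filter (fun t : Fin p => t.val < k),
              β t s * F t (x t) * F s (x s) := by
        rw [eq_comm]
        have hsub : (univ.filter (fun t : Fin p => t.val < k)) ⊆ univ \ {s} := by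
          intro t ht
          simp only [mem_filter, mem_univ, true_and] at ht
          simp only [mem_sdiff, mem_univ, mem_singleton, true_and]
          intro hh; rw [hh] at ht; exact absurd ht (lt_irrefl k)
        rw [show (∑ t ∈ univ.filter (fun t : Fin p => t.val < k),
              β t s * F t (x t) * F s (x s))
            = ∑ t ∈ univ.filter (fun t : Fin p => t.val < k),
              β t s * F t (y (k+1) t) * F s (y (k+1) s) from ?_]
        · apply Finset.sum_subset hsub
          intro t ht hnt
          simp only [mem_filter, mem_univ, true_and, not_lt] at hnt
          have hts : t ≠ s := (mem_sdiff.mp ht).2 ∘ mem_singleton.mpr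
          have hne : t.val ≠ k := fun hh => hts (Fin.ext hh)
          have : y (k+1) t = z t := by simp only [hy]; rw [if_neg (by omega)]
          rw [this, hF0, mul_zero, zero_mul]
        · apply Finset.sum_congr rfl
          intro t ht
          simp only [mem_filter, mem_univ, true_and] at ht
          have : y (k+1) t = x t := by simp only [hy]; rw [if_pos (by omega)]
          rw [this, hys]
      have hr := hratio s (y (k+1))
      rw [hupd2, hsum, hys, ihk] at hr
      rw [hr, mul_assoc, ← Real.exp_add]
      congr 2
      have hins : univ.filter (fun u : Fin p => u.val < k+1)
          = insert s (univ.filter (fun u : Fin p => u.val < k)) := by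
        ext u
        simp only [mem_filter, mem_univ, true_and, mem_insert, hs, Fin.ext_iff]
        omega
      rw [hins, Finset.sum_insert (by simp [hs]), Finset.sum_insert (by simp [hs])]
      have hsval : (univ.filter (fun t : Fin p => t.val < s.val))
          = univ.filter (fun t : Fin p => t.val < k) := rfl
      rw [hsval]
      ring
  have hfull : univ.filter (fun u : Fin p => u.val < p) = univ := by
    ext u; simp [u.isLt]
  have hx := key p le_rfl
  rw [hyp, hfull] at hx
  rw [hx]
  -- symmetrization
  set g : Fin p → Fin p → ℝ := fun t u => β t u * F t (x t) * F u (x u) with hg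
  have hgsymm : ∀ t u, g t u = g u t := by
    intro t u; simp only [hg]; rw [hsym t u]; ring
  have hsplit : ∀ u : Fin p, (univ \ {u} : Finset (Fin p))
      = univ.filter (fun t => t.val < u.val) ∪ univ.filter (fun t => u.val < t.val) := by
    intro u; ext t
    simp only [mem_sdiff, mem_univ, mem_singleton, true_and, mem_union, mem_filter,
      Fin.ext_iff]
    omega
  have hdisj : ∀ u : Fin p, Disjoint (univ.filter (fun t : Fin p => t.val < u.val))
      (univ.filter (fun t : Fin p => u.val < t.val)) := by
    intro u
    rw [Finset.disjoint_filter]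
    intro t _ h1; omega
  have hswap : ∑ u : Fin p, ∑ t ∈ univ.filter (fun t : Fin p => u.val < t.val), g t u
      = ∑ u : Fin p, ∑ t ∈ univ.filter (fun t : Fin p => t.val < u.val), g t u := by
    rw [Finset.sum_comm' (t' := univ)
      (s' := fun t : Fin p => univ.filter (fun u : Fin p => u.val < t.val)) (by
        intro u t
        simp only [mem_filter, mem_univ, true_and, and_true, true_and])]
    exact Finset.sum_congr rfl fun u _ => Finset.sum_congr rfl fun t _ => hgsymm u t
  have hBB : (∑ u : Fin p, ∑ t ∈ univ.filter (fun t : Fin p => t.val < u.val), g t u)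
      = (1/2) * ∑ u : Fin p, ∑ t ∈ univ \ {u}, g t u := by
    have h2 : (∑ u : Fin p, ∑ t ∈ univ \ {u}, g t u)
        = 2 * ∑ u : Fin p, ∑ t ∈ univ.filter (fun t : Fin p => t.val < u.val), g t u := by
      rw [two_mul]
      nth_rewrite 2 [← hswap]
      rw [← Finset.sum_add_distrib]
      refine Finset.sum_congr rfl fun u _ => ?_
      rw [hsplit u, Finset.sum_union (hdisj u)]
    rw [h2]; ring
  rw [show (∑ u : Fin p, ∑ t ∈ univ.filter (fun t : Fin p => t.val < u.val),
      β t u * F t (x t) * F u (x u)) = ∑ u : Fin p,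
      ∑ t ∈ univ.filter (fun t : Fin p => t.val < u.val), g t u from rfl, hBB]
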